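/- Let b, Δ, w : E → ℝ with w_e > 0, b_e > 0, Δ_e ≥ 0 on a finite set E of size m, let K ≥ 1, q ≥ 2 (q real), T ≥ 100 q m. Assume ∑_e w_e^q b_e^{q-1} Δ_e ≤ K^q and b_e ≥ (K/m^{1/q})·w_e^{-1} for all e. Then ∑_e w_e^q (b_e + Δ_e/T)^q ≤ ∑_e w_e^q b_e^q + 4qK^q/T. -/

import Mathlib

open Finset Real

lemma aux_one_add_rpow (q x : ℝ) (hq : 2 ≤ q) (hx : 0 ≤ x) (hx' : x ≤ 1 / (100 * q)) :
    (1 + x) ^ q ≤ 1 + 4 * q * x := by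
  have hq0 : 0 < q := by linarith
  have h1x : (0 : ℝ) < 1 + x := by linarith
  have hqx : q * x ≤ 1 / 100 := by
    rw [le_div_iff₀ (by positivity)] at hx'
    nlinarith
  have hqx0 : 0 ≤ q * x := by positivity
  have h1 : (1 + x) ^ q = Real.exp (q * Real.log (1 + x)) := by
    rw [Real.rpow_def_of_pos h1x, mul_comm]
  have hlog : Real.log (1 + x) ≤ x := by
    have := Real.log_le_sub_one_of_pos h1x
    linarith
  have h2 : (1 + x) ^ q ≤ Real.exp (q * x) := by
    rw [h1]
    exact Real.exp_le_exp.2 (by nlinarith)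
  have h3 : Real.exp (q * x) ≤ 1 / (1 - q * x) :=
    Real.exp_bound_div_one_sub_of_interval hqx0 (by linarith)
  have h4 : 1 / (1 - q * x) ≤ 1 + 4 * q * x := by
    rw [div_le_iff₀ (by linarith)]
    nlinarith
  linarith

theorem stmt_7 {E : Type*} [Fintype E] (b Δ w : E → ℝ) (K q T : ℝ)
    (hw : ∀ e, 0 < w e) (hb : ∀ e, 0 < b e) (hΔ : ∀ e, 0 ≤ Δ e)
    (hK : 1 ≤ K) (hq : 2 ≤ q) (hT : 100 * q * (Fintype.card E : ℝ) ≤ T)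
    (hlen : ∑ e, w e ^ q * b e ^ (q - 1) * Δ e ≤ K ^ q)
    (hlow : ∀ e, (K / (Fintype.card E : ℝ) ^ (1 / q)) * (w e)⁻¹ ≤ b e) :
    ∑ e, w e ^ q * (b e + Δ e / T) ^ q ≤ (∑ e, w e ^ q * b e ^ q) + 4 * q * K ^ q / T := by
  have hq0 : 0 < q := by linarith
  have hK0 : (0 : ℝ) < K := by linarith
  set m : ℝ := (Fintype.card E : ℝ) with hm
  rcases Nat.eq_zero_or_pos (Fintype.card E) with hc | hc
  · have hE : IsEmpty E := Fintype.card_eq_zero_iff.mp hc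
    simp only [Finset.univ_eq_empty, Finset.sum_empty]
    have hT0 : 0 ≤ T := by
      have : m = 0 := by rw [hm, hc]; norm_num
      rw [this] at hT; linarith
    positivity
  have hm1 : (1 : ℝ) ≤ m := by
    rw [hm]; exact_mod_cast hc
  have hm0 : (0 : ℝ) < m := by linarith
  have hT0 : (0 : ℝ) < T := by nlinarith
  -- nonnegativity of each term in hlen
  have hterm : ∀ e, 0 ≤ w e ^ q * b e ^ (q - 1) * Δ e := fun e => by
    have := (hw e); have := (hb e); have := hΔ e; positivity
  have hle_each : ∀ e, w e ^ q * b e ^ (q - 1) * Δ e ≤ K ^ q := fun e => by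
    calc w e ^ q * b e ^ (q - 1) * Δ e
        ≤ ∑ e', w e' ^ q * b e' ^ (q - 1) * Δ e' :=
          Finset.single_le_sum (fun e' _ => hterm e') (Finset.mem_univ e)
      _ ≤ K ^ q := hlen
  -- lower bound on w^q b^q
  have hwb : ∀ e, K ^ q / m ≤ (w e * b e) ^ q := fun e => by
    have h1 : K / m ^ (1 / q) ≤ w e * b e := by
      have := hlow e
      have hw' := hw e
      calc K / m ^ (1 / q) = (K / m ^ (1 / q)) * (w e)⁻¹ * w e := by
            field_simp
        _ ≤ b e * w e := mul_le_mul_of_nonneg_right this hw'.le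
        _ = w e * b e := mul_comm _ _
    have h0 : 0 ≤ K / m ^ (1 / q) := by positivity
    calc K ^ q / m = (K / m ^ (1 / q)) ^ q := by
          rw [Real.div_rpow hK0.le (by positivity), ← Real.rpow_mul hm0.le,
            one_div_mul_cancel hq0.ne', Real.rpow_one]
      _ ≤ (w e * b e) ^ q := Real.rpow_le_rpow h0 h1 hq0.le
  -- key: Δ e ≤ m * b e
  have hΔb : ∀ e, Δ e ≤ m * b e := fun e => by
    have h1 := hle_each e
    have h2 := hwb e
    have hwbq : (w e * b e) ^ q = w e ^ q * b e ^ q :=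
      Real.mul_rpow (hw e).le (hb e).le
    rw [hwbq] at h2
    have hb' : b e ^ (q - 1) = b e ^ q / b e := by
      rw [Real.rpow_sub (hb e), Real.rpow_one]
    rw [hb'] at h1
    have hKq : 0 < K ^ q := by positivity
    have hbq : 0 < b e ^ q := Real.rpow_pos_of_pos (hb e) q
    have hwq : 0 < w e ^ q := Real.rpow_pos_of_pos (hw e) q
    -- from h1: w^q b^q Δ / b ≤ K^q ; from h2: K^q/m ≤ w^q b^q
    have h3 : w e ^ q * b e ^ q * Δ e ≤ K ^ q * b e := by
      have h1' : w e ^ q * b e ^ q * Δ e / b e ≤ K ^ q := by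
        calc w e ^ q * b e ^ q * Δ e / b e = w e ^ q * (b e ^ q / b e) * Δ e := by
              field_simp
          _ ≤ K ^ q := h1
      exact (div_le_iff₀ (hb e)).mp h1'
    have h4 : K ^ q / m * Δ e ≤ K ^ q * b e :=
      le_trans (mul_le_mul_of_nonneg_right h2 (hΔ e)) h3
    rw [div_mul_eq_mul_div, div_le_iff₀ hm0] at h4
    have := le_of_mul_le_mul_left (by linarith [h4] : K ^ q * Δ e ≤ K ^ q * (b e * m)) hKq
    linarith
  -- per-element bound
  have hmain : ∀ e, w e ^ q * (b e + Δ e / T) ^ q ≤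
      w e ^ q * b e ^ q + 4 * q / T * (w e ^ q * b e ^ (q - 1) * Δ e) := fun e => by
    have hbe := hb e
    have hx0 : 0 ≤ Δ e / T / b e := div_nonneg (div_nonneg (hΔ e) hT0.le) hbe.le
    have hx1 : Δ e / T / b e ≤ 1 / (100 * q) := by
      rw [div_le_div_iff₀ (hb e) (by linarith : (0:ℝ) < 100 * q), one_mul, div_mul_eq_mul_div,
        div_le_iff₀ hT0]
      have h1 : Δ e * (100 * q) ≤ m * b e * (100 * q) :=
        mul_le_mul_of_nonneg_right (hΔb e) (by linarith)
      have h2 : b e * (100 * q * m) ≤ b e * T := mul_le_mul_of_nonneg_left hT hbe.le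
      nlinarith
    have hber := aux_one_add_rpow q (Δ e / T / b e) hq hx0 hx1
    have hsplit : b e + Δ e / T = b e * (1 + Δ e / T / b e) := by
      field_simp
    have h1 : (b e + Δ e / T) ^ q ≤ b e ^ q * (1 + 4 * q * (Δ e / T / b e)) := by
      rw [hsplit, Real.mul_rpow hbe.le (by positivity)]
      exact mul_le_mul_of_nonneg_left hber (by positivity)
    have h2 : b e ^ q * (1 + 4 * q * (Δ e / T / b e)) =
        b e ^ q + 4 * q / T * (b e ^ (q - 1) * Δ e) := by
      rw [Real.rpow_sub hbe, Real.rpow_one]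
      field_simp
    have hwq : 0 ≤ w e ^ q := (Real.rpow_pos_of_pos (hw e) q).le
    calc w e ^ q * (b e + Δ e / T) ^ q
        ≤ w e ^ q * (b e ^ q + 4 * q / T * (b e ^ (q - 1) * Δ e)) := by
          rw [← h2]; exact mul_le_mul_of_nonneg_left h1 hwq
      _ = w e ^ q * b e ^ q + 4 * q / T * (w e ^ q * b e ^ (q - 1) * Δ e) := by ring
  calc ∑ e, w e ^ q * (b e + Δ e / T) ^ q
      ≤ ∑ e, (w e ^ q * b e ^ q + 4 * q / T * (w e ^ q * b e ^ (q - 1) * Δ e)) :=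
        Finset.sum_le_sum fun e _ => hmain e
    _ = (∑ e, w e ^ q * b e ^ q) + 4 * q / T * ∑ e, w e ^ q * b e ^ (q - 1) * Δ e := by
        rw [Finset.sum_add_distrib, Finset.mul_sum]
    _ ≤ (∑ e, w e ^ q * b e ^ q) + 4 * q * K ^ q / T := by
        have h1 : 4 * q / T * ∑ e, w e ^ q * b e ^ (q - 1) * Δ e ≤ 4 * q / T * K ^ q :=
          mul_le_mul_of_nonneg_left hlen (by positivity)
        have : 4 * q / T * K ^ q = 4 * q * K ^ q / T := by ring
        linarith [h1, this.le]
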